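/- For every positive integer m, the series ∑_{n=0}^∞ F_{2^{n+2}} · [(-1)^m − 1 + ∑_{k=0}^{m-1} (-1)^k · L_{(m-k)·2^{n+2}}] / F_{(2m+1)·2^{n+2}} converges with sum 1/(F_{2m+1} · L_{2m+1}). -/

import Mathlib

open Real goldenRatio Filter
local notation "Φ" => goldenRatio
local notation "Ψ" => goldenConj

/-- The Lucas numbers: L 0 = 2, L 1 = 1, L (n+2) = L n + L (n+1). -/
def lucas : ℕ → ℕ
  | 0 => 2
  | 1 => 1
  | n + 2 => lucas n + lucas (n + 1)

lemma lucas_real : ∀ n : ℕ, (lucas n : ℝ) = Φ ^ n + Ψ ^ n := by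
  intro n
  induction n using Nat.twoStepInduction with
  | zero => norm_num [lucas]
  | one => simpa [lucas] using gold_add_goldConj.symm
  | more n ih1 ih2 =>
    show ((lucas n + lucas (n+1) : ℕ) : ℝ) = _
    push_cast [ih1, ih2]
    have h5 : (√5) ^ 2 = 5 := Real.sq_sqrt (by norm_num)
    linear_combination Φ ^ n * goldenRatio_sq + Ψ ^ n * goldenConj_sq - (1/2) * (Φ ^ n + Ψ ^ n) * h5

lemma lucas_pos : ∀ n : ℕ, 0 < lucas n := by
  intro n
  induction n using Nat.twoStepInduction with
  | zero => norm_num [lucas]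
  | one => norm_num [lucas]
  | more n ih1 ih2 => show 0 < lucas n + lucas (n+1); omega

lemma lucas_mono : ∀ a b : ℕ, 1 ≤ a → a ≤ b → lucas a ≤ lucas b := by
  have step : ∀ n : ℕ, 1 ≤ n → lucas n ≤ lucas (n + 1) := by
    intro n hn
    match n, hn with
    | 1, _ => norm_num [lucas]
    | (k+2), _ =>
      show lucas (k+2) ≤ lucas (k+1) + lucas (k+2)
      omega
  intro a b ha hab
  induction b with
  | zero => omega
  | succ b ih =>
    rcases Nat.lt_or_ge a (b+1) with h | h
    · exact (ih (by omega)).trans (step b (by omega))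
    · have : a = b + 1 := by omega
      simp [this]

lemma fib_two_mul_real (a : ℕ) :
    (Nat.fib (2 * a) : ℝ) = (Nat.fib a : ℝ) * (lucas a : ℝ) := by
  rw [Real.coe_fib_eq, Real.coe_fib_eq, lucas_real, two_mul, pow_add, pow_add]
  ring

lemma key (x y : ℝ) (h : x * y = 1) :
    ∀ m : ℕ, 0 < m →
      (x + y) * ((-1 : ℝ) ^ m +
        ∑ k ∈ Finset.range m, (-1 : ℝ) ^ k * (x ^ (2 * (m - k)) + y ^ (2 * (m - k))))
      = x ^ (2 * m + 1) + y ^ (2 * m + 1) := by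
  intro m
  induction m with
  | zero => omega
  | succ m ih =>
    intro _
    rcases Nat.eq_zero_or_pos m with rfl | hm
    · simp only [zero_add, Finset.sum_range_one]
      norm_num
      linear_combination (x + y) * h
    · rw [Finset.sum_range_succ']
      have hs : ∀ k ∈ Finset.range m,
          (-1 : ℝ) ^ (k+1) * (x ^ (2 * (m + 1 - (k+1))) + y ^ (2 * (m + 1 - (k+1))))
          = -((-1 : ℝ) ^ k * (x ^ (2 * (m - k)) + y ^ (2 * (m - k)))) := by
        intro k _
        rw [Nat.succ_sub_succ]
        ring
      rw [Finset.sum_congr rfl hs, Finset.sum_neg_distrib]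
      have e1 : 2 * (m + 1) + 1 = (2 * m + 1) + 2 := by ring
      have e2 : 2 * (m + 1 - 0) = 2 * m + 2 := by omega
      rw [e1, e2]
      have IH := ih hm
      linear_combination -IH + (x ^ (2*m+1) + y ^ (2*m+1)) * h

lemma fact2 (c m : ℕ) (hc : Even c) (hm : 0 < m) :
    (lucas c : ℝ) * ((-1:ℝ)^m + ∑ k ∈ Finset.range m, (-1:ℝ)^k * (lucas ((m-k) * (2*c)) : ℝ))
    = (lucas ((2*m+1)*c) : ℝ) := by
  have hxy : (Φ^c) * (Ψ^c) = 1 := by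
    rw [← mul_pow, goldenRatio_mul_goldenConj, hc.neg_one_pow]
  simp only [lucas_real, show ∀ j:ℕ, j*(2*c) = c*(2*j) from fun j => by ring,
    show (2*m+1)*c = c*(2*m+1) from by ring, pow_mul Φ c, pow_mul Ψ c]
  exact key _ _ hxy m hm

lemma fib_prod_le (c m : ℕ) (hc : 1 ≤ c) (hm : 0 < m) :
    Nat.fib c * Nat.fib (2*c) ≤ Nat.fib ((2*m+1)*c) := by
  have h1 : Nat.fib c * Nat.fib (2*c) ≤ Nat.fib (3*c) := by
    have := Nat.fib_add c (2*c-1)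
    have e1 : c + (2*c-1) + 1 = 3*c := by omega
    have e2 : 2*c-1+1 = 2*c := by omega
    rw [e1, e2] at this
    calc Nat.fib c * Nat.fib (2*c) ≤ Nat.fib (c+1) * Nat.fib (2*c) :=
          Nat.mul_le_mul_right _ Nat.fib_le_fib_succ
      _ ≤ Nat.fib c * Nat.fib (2*c-1) + Nat.fib (c+1) * Nat.fib (2*c) := Nat.le_add_left _ _
      _ = Nat.fib (3*c) := this.symm
  exact h1.trans (Nat.fib_mono (by nlinarith))

theorem stmt16 (m : ℕ) (hm : 0 < m) :
    HasSum
      (fun n : ℕ =>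
        (Nat.fib (2 ^ (n + 2)) : ℝ) *
          ((-1 : ℝ) ^ m - 1 +
            ∑ k ∈ Finset.range m, (-1 : ℝ) ^ k * (lucas ((m - k) * 2 ^ (n + 2)) : ℝ)) /
          (Nat.fib ((2 * m + 1) * 2 ^ (n + 2)) : ℝ))
      (1 / ((Nat.fib (2 * m + 1) : ℝ) * (lucas (2 * m + 1) : ℝ))) := by
  set d : ℕ → ℝ := fun n => (Nat.fib (2 ^ (n+1)) : ℝ) / (Nat.fib ((2*m+1) * 2 ^ (n+1)) : ℝ)
    with hd
  have hc1 : ∀ n : ℕ, 1 ≤ 2 ^ (n+1) := fun n => Nat.one_le_two_pow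
  have hceven : ∀ n : ℕ, Even ((2:ℕ) ^ (n+1)) := fun n => ⟨2^n, by rw [pow_succ]; ring⟩
  have hF : ∀ n : ℕ, (0:ℝ) < (Nat.fib ((2*m+1) * 2 ^ (n+1)) : ℝ) := by
    intro n
    exact_mod_cast Nat.fib_pos.mpr (by positivity)
  have hΛ : ∀ j : ℕ, (0:ℝ) < (lucas j : ℝ) := fun j => by exact_mod_cast lucas_pos j
  have hpow : ∀ n : ℕ, (2:ℕ) ^ (n+2) = 2 * 2 ^ (n+1) := fun n => by rw [pow_succ, mul_comm]
  have hd1 : ∀ n : ℕ, d (n+1) =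
      (Nat.fib (2 ^ (n+1)) : ℝ) * (lucas (2 ^ (n+1)) : ℝ) /
        ((Nat.fib ((2*m+1) * 2 ^ (n+1)) : ℝ) * (lucas ((2*m+1) * 2 ^ (n+1)) : ℝ)) := by
    intro n
    rw [hd]
    show (Nat.fib (2 ^ (n+2)) : ℝ) / (Nat.fib ((2*m+1) * 2 ^ (n+2)) : ℝ) = _
    rw [hpow n, show (2*m+1) * (2 * 2 ^ (n+1)) = 2 * ((2*m+1) * 2 ^ (n+1)) from by ring,
      fib_two_mul_real, fib_two_mul_real]
  have hterm : ∀ n : ℕ,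
      (Nat.fib (2 ^ (n + 2)) : ℝ) *
          ((-1 : ℝ) ^ m - 1 +
            ∑ k ∈ Finset.range m, (-1 : ℝ) ^ k * (lucas ((m - k) * 2 ^ (n + 2)) : ℝ)) /
          (Nat.fib ((2 * m + 1) * 2 ^ (n + 2)) : ℝ) = d n - d (n+1) := by
    intro n
    have hfact := fact2 (2 ^ (n+1)) m (hceven n) hm
    rw [hd1 n]
    show _ = (Nat.fib (2 ^ (n+1)) : ℝ) / (Nat.fib ((2*m+1) * 2 ^ (n+1)) : ℝ) - _
    rw [show (2*m+1) * 2 ^ (n+2) = 2 * ((2*m+1) * 2 ^ (n+1)) from by rw [hpow n]; ring,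
      hpow n, fib_two_mul_real, fib_two_mul_real]
    have h1 := hF n
    have h2 := hΛ ((2*m+1) * 2 ^ (n+1))
    field_simp
    linear_combination hfact
  have hmono : ∀ n : ℕ, d (n+1) ≤ d n := by
    intro n
    rw [hd1 n]
    show _ ≤ (Nat.fib (2 ^ (n+1)) : ℝ) / (Nat.fib ((2*m+1) * 2 ^ (n+1)) : ℝ)
    rw [div_le_div_iff₀ (mul_pos (hF n) (hΛ _)) (hF n)]
    have hlm : (lucas (2 ^ (n+1)) : ℝ) ≤ (lucas ((2*m+1) * 2 ^ (n+1)) : ℝ) := by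
      exact_mod_cast lucas_mono _ _ (hc1 n) (Nat.le_mul_of_pos_left _ (by omega))
    have := hF n
    have hfibnn : (0:ℝ) ≤ (Nat.fib (2 ^ (n+1)) : ℝ) := Nat.cast_nonneg _
    nlinarith [mul_nonneg (mul_nonneg hfibnn this.le) (sub_nonneg.mpr hlm)]
  have hub : ∀ n : ℕ, d n ≤ 1 / (Nat.fib (2 ^ (n+2)) : ℝ) := by
    intro n
    have hnat := fib_prod_le (2 ^ (n+1)) m (hc1 n) hm
    have hfib2 : (0:ℝ) < (Nat.fib (2 ^ (n+2)) : ℝ) := by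
      exact_mod_cast Nat.fib_pos.mpr (by positivity)
    have hnat' : Nat.fib (2^(n+1)) * Nat.fib (2^(n+2)) ≤ Nat.fib ((2*m+1) * 2^(n+1)) := by
      rw [hpow n]; exact hnat
    rw [hd, div_le_div_iff₀ (hF n) hfib2, one_mul]
    exact_mod_cast hnat'
  have hd_nonneg : ∀ n : ℕ, 0 ≤ d n := fun n => div_nonneg (Nat.cast_nonneg _) (Nat.cast_nonneg _)
  have hdlim : Filter.Tendsto d atTop (nhds 0) := by
    apply squeeze_zero hd_nonneg hub
    rw [show (fun n : ℕ => 1 / (Nat.fib (2 ^ (n+2)) : ℝ)) = (fun x : ℝ => x⁻¹) ∘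
      (fun n : ℕ => (Nat.fib (2 ^ (n+2)) : ℝ)) from by funext n; simp [one_div]]
    apply Filter.Tendsto.comp tendsto_inv_atTop_zero
    apply tendsto_atTop_mono' atTop (show ∀ᶠ n : ℕ in atTop, (n:ℝ) ≤ (Nat.fib (2 ^ (n+2)) : ℝ) from ?_)
      tendsto_natCast_atTop_atTop
    filter_upwards [Filter.eventually_ge_atTop 2] with n hn
    have h1 : n + 7 ≤ 2 ^ (n+2) := by
      have := Nat.lt_two_pow_self (n := n)
      calc n + 7 ≤ 4*n + 4 := by omega
        _ = 4 * (n+1) := by ring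
        _ ≤ 4 * 2^n := by have := Nat.lt_two_pow_self (n := n); omega
        _ = 2 ^ (n+2) := by ring
    have h2 : n ≤ Nat.fib (2 ^ (n+2)) :=
      le_trans (by omega) (le_trans (Nat.le_fib_self (by omega)) (Nat.fib_mono h1))
    exact_mod_cast h2
  have hd0 : d 0 = 1 / ((Nat.fib (2 * m + 1) : ℝ) * (lucas (2 * m + 1) : ℝ)) := by
    rw [hd]
    show (Nat.fib (2^1) : ℝ) / (Nat.fib ((2*m+1) * 2^1) : ℝ) = _
    rw [show (2*m+1) * 2^1 = 2 * (2*m+1) from by ring, fib_two_mul_real]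
    norm_num
  rw [hasSum_iff_tendsto_nat_of_nonneg
    (fun i => by rw [hterm i]; exact sub_nonneg.mpr (hmono i)), ← hd0]
  have hsum : ∀ n : ℕ, (∑ i ∈ Finset.range n,
      (Nat.fib (2 ^ (i + 2)) : ℝ) *
          ((-1 : ℝ) ^ m - 1 +
            ∑ k ∈ Finset.range m, (-1 : ℝ) ^ k * (lucas ((m - k) * 2 ^ (i + 2)) : ℝ)) /
          (Nat.fib ((2 * m + 1) * 2 ^ (i + 2)) : ℝ)) = d 0 - d n := by
    intro n
    rw [Finset.sum_congr rfl fun i _ => hterm i, Finset.sum_range_sub' d]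
  simp only [hsum]
  simpa using Filter.Tendsto.const_sub (d 0) hdlim
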